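/- Let n ≥ 3 be an integer. There exists a constant C > 0, depending only on n, such that for every 0 < ρ ≤ 1 and every x̃ ∈ ℝ^{n-1} with |x̃| ≤ ρ, one has ∫_0^2 ∫_{B(0,ρ)} (4πt)^{-n/2} exp(-|x̃ - ỹ|²/(4t)) dỹ dt ≥ C · σ^{1/(n-1)}, where B(0,ρ) = {ỹ ∈ ℝ^{n-1} : |ỹ| < ρ} and σ is the Lebesgue measure of B(0,ρ) in ℝ^{n-1}. -/

import Mathlib

open MeasureTheory Real

lemma integrable_rexp_neg_mul_sq_norm' {V : Type*} [NormedAddCommGroup V]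
    [InnerProductSpace ℝ V] [FiniteDimensional ℝ V] [MeasurableSpace V] [BorelSpace V]
    {b : ℝ} (hb : 0 < b) : Integrable (fun v : V => rexp (-b * ‖v‖ ^ 2)) := by
  have h := (GaussianFourier.integrable_cexp_neg_mul_sq_norm_add
    (b := (b : ℂ)) (by simpa using hb) 0 (0 : V)).norm
  refine h.congr (Filter.Eventually.of_forall fun v => ?_)
  simp [Complex.norm_exp, ← Complex.ofReal_pow]

set_option maxHeartbeats 1000000 in
/-- For integer `n ≥ 3` there is `C > 0` depending only on `n` such that for every
`0 < ρ ≤ 1` and every `x̃ ∈ ℝ^{n-1}` with `|x̃| ≤ ρ`,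
`∫_0^2 ∫_{B(0,ρ)} (4πt)^{-n/2} exp(-|x̃-ỹ|²/(4t)) dỹ dt ≥ C σ^{1/(n-1)}`,
where `σ` is the Lebesgue measure of the ball `B(0,ρ) ⊂ ℝ^{n-1}`. -/
theorem stmt_6 (n : ℕ) (hn : 3 ≤ n) :
    ∃ C > (0:ℝ), ∀ ρ : ℝ, 0 < ρ → ρ ≤ 1 →
      ∀ x : EuclideanSpace ℝ (Fin (n - 1)), ‖x‖ ≤ ρ →
        C * ((volume (Metric.ball (0 : EuclideanSpace ℝ (Fin (n - 1))) ρ)).toReal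
              ^ (1 / ((n:ℝ) - 1))) ≤
          ∫ t in Set.Ioo (0:ℝ) 2,
            ∫ y in Metric.ball (0 : EuclideanSpace ℝ (Fin (n - 1))) ρ,
              (4 * Real.pi * t) ^ (-(n:ℝ) / 2) * Real.exp (-‖x - y‖ ^ 2 / (4 * t)) := by
  set d : ℕ := n - 1 with hd
  set E := EuclideanSpace ℝ (Fin d)
  have hd2 : 2 ≤ d := by omega
  have hdcast : (d : ℝ) = (n : ℝ) - 1 := by
    rw [hd, Nat.cast_sub (by omega : 1 ≤ n)]
    norm_num
  have hfr : Module.finrank ℝ E = d := finrank_euclideanSpace_fin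
  haveI : Nontrivial E := by
    apply Module.nontrivial_of_finrank_pos (R := ℝ)
    rw [hfr]; omega
  set ω : ℝ := (volume (Metric.ball (0 : E) 1)).toReal with hω
  have hω_pos : 0 < ω := by
    apply ENNReal.toReal_pos
    · exact (Metric.measure_ball_pos volume 0 one_pos).ne'
    · exact (measure_ball_lt_top).ne
  have hCpos : 0 < (1/4) * rexp (-4) * (2 * π) ^ (-(n:ℝ)/2) * ω ^ (1 - 1/((n:ℝ)-1)) := by
    have h1 : (0:ℝ) < (2 * π) ^ (-(n:ℝ)/2) := Real.rpow_pos_of_pos (by positivity) _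
    have h2 : (0:ℝ) < ω ^ (1 - 1/((n:ℝ)-1)) := Real.rpow_pos_of_pos hω_pos _
    positivity
  refine ⟨(1/4) * rexp (-4) * (2 * π) ^ (-(n:ℝ)/2) * ω ^ (1 - 1/((n:ℝ)-1)), hCpos,
    fun ρ hρ hρ1 x hx => ?_⟩
  set B := Metric.ball (0 : E) ρ with hB
  set σ : ℝ := (volume B).toReal with hσdef
  have hσ : σ = ρ ^ d * ω := by
    rw [hσdef, hB, Measure.addHaar_ball volume (0 : E) hρ.le, hfr, ENNReal.toReal_mul,
      ENNReal.toReal_ofReal (by positivity)]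
  have hσpos : 0 < σ := by rw [hσ]; positivity
  set f : ℝ → E → ℝ := fun t y =>
    (4 * π * t) ^ (-(n:ℝ) / 2) * rexp (-‖x - y‖ ^ 2 / (4 * t)) with hf
  -- nonnegativity
  have hf_nonneg : ∀ t : ℝ, 0 < t → ∀ y : E, 0 ≤ f t y := fun t ht y => by
    have : (0:ℝ) ≤ 4 * π * t := by positivity
    exact mul_nonneg (Real.rpow_nonneg this _) (Real.exp_pos _).le
  -- global integrability of f t and value of the full-space integral
  have hexp : ∀ t : ℝ, 0 < t → ∀ s : ℝ, -s / (4 * t) = -(1/(4*t)) * s := by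
    intro t ht s
    field_simp
  have hf_int : ∀ t : ℝ, 0 < t → Integrable (f t) volume := by
    intro t ht
    have hb : (0:ℝ) < 1 / (4 * t) := by positivity
    have h1 : Integrable (fun y : E => rexp (-(1/(4*t)) * ‖x - y‖ ^ 2)) volume :=
      (integrable_rexp_neg_mul_sq_norm' (V := E) hb).comp_sub_left x
    have h2 := h1.const_mul ((4 * π * t) ^ (-(n:ℝ) / 2))
    refine h2.congr (Filter.Eventually.of_forall fun y => ?_)
    simp only [hf, hexp t ht]
  have hf_val : ∀ t : ℝ, 0 < t →
      (∫ y : E, f t y) = (4 * π) ^ (-(1:ℝ)/2) * t ^ (-(1:ℝ)/2) := by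
    intro t ht
    have hb : (0:ℝ) < 1 / (4 * t) := by positivity
    have h4πt : (0:ℝ) < 4 * π * t := by positivity
    have e1 : (∫ y : E, f t y)
        = (4 * π * t) ^ (-(n:ℝ) / 2) * ∫ y : E, rexp (-(1/(4*t)) * ‖x - y‖ ^ 2) := by
      rw [← integral_const_mul]
      congr 1 with y
      simp only [hf, hexp t ht]
    have e2 : (∫ y : E, rexp (-(1/(4*t)) * ‖x - y‖ ^ 2))
        = ∫ z : E, rexp (-(1/(4*t)) * ‖z‖ ^ 2) :=
      integral_sub_left_eq_self (fun z : E => rexp (-(1/(4*t)) * ‖z‖ ^ 2)) volume x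
    rw [e1, e2, GaussianFourier.integral_rexp_neg_mul_sq_norm hb, hfr]
    have e3 : π / (1 / (4 * t)) = 4 * π * t := by field_simp
    rw [e3]
    rw [← Real.rpow_add h4πt]
    have e4 : -(n:ℝ)/2 + (d:ℝ)/2 = -(1:ℝ)/2 := by rw [hdcast]; ring
    rw [e4, Real.mul_rpow (by positivity) ht.le]
  -- the inner integral as a function of t
  set g : ℝ → ℝ := fun t => ∫ y in B, f t y with hg
  have hg_nonneg : ∀ t : ℝ, 0 < t → 0 ≤ g t := fun t ht =>
    integral_nonneg (fun y => hf_nonneg t ht y)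
  -- measurability of g
  have hg_meas : AEStronglyMeasurable g (volume.restrict (Set.Ioo (0:ℝ) 2)) := by
    have hm : Measurable (fun p : ℝ × E => f p.1 p.2) := by
      rw [hf]; fun_prop
    exact (hm.aestronglyMeasurable
      (μ := (volume.restrict (Set.Ioo (0:ℝ) 2)).prod (volume.restrict B))).integral_prod_right'
  -- bound for g
  have hg_bound : ∀ t ∈ Set.Ioo (0:ℝ) 2,
      ‖g t‖ ≤ (4 * π) ^ (-(1:ℝ)/2) * t ^ (-(1:ℝ)/2) := by
    intro t ht
    rw [Real.norm_of_nonneg (hg_nonneg t ht.1)]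
    calc g t ≤ ∫ y : E, f t y := by
          exact setIntegral_le_integral (hf_int t ht.1)
            (Filter.Eventually.of_forall fun y => hf_nonneg t ht.1 y)
      _ = (4 * π) ^ (-(1:ℝ)/2) * t ^ (-(1:ℝ)/2) := hf_val t ht.1
  -- integrability of g on (0,2)
  have hmaj : IntegrableOn (fun t : ℝ => (4 * π) ^ (-(1:ℝ)/2) * t ^ (-(1:ℝ)/2))
      (Set.Ioo (0:ℝ) 2) volume := by
    have h1 : IntervalIntegrable (fun t : ℝ => t ^ (-(1:ℝ)/2)) volume 0 2 :=
      intervalIntegral.intervalIntegrable_rpow' (by norm_num)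
    have h2 := (h1.const_mul ((4 * π) ^ (-(1:ℝ)/2)))
    rw [intervalIntegrable_iff_integrableOn_Ioc_of_le (by norm_num : (0:ℝ) ≤ 2)] at h2
    exact h2.mono_set Set.Ioo_subset_Ioc_self
  have hg_int : IntegrableOn g (Set.Ioo (0:ℝ) 2) volume := by
    refine Integrable.mono' hmaj hg_meas ?_
    rw [ae_restrict_iff' measurableSet_Ioo]
    exact Filter.Eventually.of_forall hg_bound
  -- the small interval
  set a : ℝ := ρ^2/4 with ha
  set b : ℝ := ρ^2/2 with hb'
  have hab : Set.Ioo a b ⊆ Set.Ioo (0:ℝ) 2 := by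
    intro t htm
    constructor
    · have := htm.1; nlinarith
    · have := htm.2; nlinarith
  -- pointwise lower bound on the small region
  set K : ℝ := (2 * π * ρ^2) ^ (-(n:ℝ)/2) * rexp (-4) with hK
  have hKpos : 0 < K := by positivity
  have hflow : ∀ t ∈ Set.Ioo a b, ∀ y ∈ B, K ≤ f t y := by
    intro t htm y hy
    have ht0 : 0 < t := lt_of_le_of_lt (by positivity) htm.1
    have hxy : ‖x - y‖ ≤ 2 * ρ := by
      calc ‖x - y‖ ≤ ‖x‖ + ‖y‖ := norm_sub_le x y
        _ ≤ ρ + ρ := add_le_add hx (by simpa [hB] using mem_ball_zero_iff.mp hy |>.le)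
        _ = 2 * ρ := by ring
    have hxy2 : ‖x - y‖ ^ 2 ≤ 4 * ρ ^ 2 := by nlinarith [norm_nonneg (x - y)]
    have h1 : (2 * π * ρ^2) ^ (-(n:ℝ)/2) ≤ (4 * π * t) ^ (-(n:ℝ)/2) := by
      apply Real.rpow_le_rpow_of_nonpos (by positivity)
      · nlinarith [htm.2, Real.pi_pos]
      · have : (0:ℝ) < (n:ℝ) := by positivity
        linarith [this]
    have h2 : rexp (-4) ≤ rexp (-‖x - y‖ ^ 2 / (4 * t)) := by
      apply Real.exp_le_exp.mpr
      rw [neg_div, neg_le_neg_iff]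
      rw [div_le_iff₀ (by positivity)]
      have := htm.1
      nlinarith
    calc K = (2 * π * ρ^2) ^ (-(n:ℝ)/2) * rexp (-4) := rfl
      _ ≤ (4 * π * t) ^ (-(n:ℝ)/2) * rexp (-‖x - y‖ ^ 2 / (4 * t)) := by
          apply mul_le_mul h1 h2 (Real.exp_pos _).le (Real.rpow_nonneg (by positivity) _)
      _ = f t y := rfl
  -- lower bound for g on the small interval
  have hglow : ∀ t ∈ Set.Ioo a b, K * σ ≤ g t := by
    intro t htm
    have ht0 : 0 < t := lt_of_le_of_lt (by positivity) htm.1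
    have hBfin : volume B ≠ ⊤ := measure_ball_lt_top.ne
    have hconst : IntegrableOn (fun _ : E => K) B volume := by
      apply (integrableOn_const_iff (C := _)).mpr
      right; exact measure_ball_lt_top
    have : (∫ _ in B, K) ≤ g t := by
      apply setIntegral_mono_on hconst ((hf_int t ht0).integrableOn) Metric.isOpen_ball.measurableSet
      intro y hy
      exact hflow t htm y hy
    rwa [setIntegral_const, smul_eq_mul, mul_comm] at this
  -- putting the chain together
  have step1 : ∫ t in Set.Ioo a b, g t ≤ ∫ t in Set.Ioo (0:ℝ) 2, g t := by
    apply setIntegral_mono_set hg_int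
    · filter_upwards [ae_restrict_mem measurableSet_Ioo] with t ht using hg_nonneg t ht.1
    · exact Filter.Eventually.of_forall hab
  have step2 : (b - a) * (K * σ) ≤ ∫ t in Set.Ioo a b, g t := by
    have hconst : IntegrableOn (fun _ : ℝ => K * σ) (Set.Ioo a b) volume := by
      apply (integrableOn_const_iff (C := _)).mpr
      right
      rw [Real.volume_Ioo]
      exact ENNReal.ofReal_lt_top
    have h := setIntegral_mono_on hconst (hg_int.mono_set hab)
      measurableSet_Ioo hglow
    rwa [setIntegral_const, Real.volume_real_Ioo_of_le (by nlinarith : a ≤ b),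
      smul_eq_mul] at h
  -- final computation
  have hba : b - a = ρ^2/4 := by rw [hb', ha]; ring
  have key : (1/4) * rexp (-4) * (2 * π) ^ (-(n:ℝ)/2) * ω ^ (1 - 1/((n:ℝ)-1)) *
      σ ^ (1/((n:ℝ)-1)) ≤ (b - a) * (K * σ) := by
    have hσ_rpow : σ ^ (1/((n:ℝ)-1)) = ρ * ω ^ (1/((n:ℝ)-1)) := by
      have hn1 : (n:ℝ) - 1 ≠ 0 := by
        have h3 : (3:ℝ) ≤ (n:ℝ) := by exact_mod_cast hn
        intro h; linarith
      have hA : (d:ℝ) * (1/((n:ℝ)-1)) = 1 := by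
        rw [hdcast]; field_simp
      rw [hσ, Real.mul_rpow (by positivity) hω_pos.le, ← Real.rpow_natCast ρ d,
        ← Real.rpow_mul hρ.le, hA, Real.rpow_one]
    have hK2 : K = (2 * π) ^ (-(n:ℝ)/2) * ρ ^ (-(n:ℝ)) * rexp (-4) := by
      have hA : ((2:ℕ):ℝ) * (-(n:ℝ)/2) = -(n:ℝ) := by push_cast; ring
      rw [hK, Real.mul_rpow (by positivity) (by positivity), ← Real.rpow_natCast ρ 2,
        ← Real.rpow_mul hρ.le, hA]
    rw [hba, hK2, hσ_rpow, hσ]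
    have hωpow : ω ^ (1 - 1/((n:ℝ)-1)) * ω ^ (1/((n:ℝ)-1)) = ω := by
      rw [← Real.rpow_add hω_pos]; norm_num
    have hρpow : ρ^2 * ρ ^ (-(n:ℝ)) * ρ ^ d = ρ := by
      have hA : ((2:ℕ):ℝ) + -(n:ℝ) + (d:ℝ) = 1 := by
        rw [hdcast]; push_cast; ring
      rw [← Real.rpow_natCast ρ 2, ← Real.rpow_natCast ρ d, ← Real.rpow_add hρ,
        ← Real.rpow_add hρ, hA, Real.rpow_one]
    calc (1/4) * rexp (-4) * (2 * π) ^ (-(n:ℝ)/2) * ω ^ (1 - 1/((n:ℝ)-1)) *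
        (ρ * ω ^ (1/((n:ℝ)-1)))
        = (1/4) * rexp (-4) * (2 * π) ^ (-(n:ℝ)/2) * ρ *
          (ω ^ (1 - 1/((n:ℝ)-1)) * ω ^ (1/((n:ℝ)-1))) := by ring
      _ = (1/4) * rexp (-4) * (2 * π) ^ (-(n:ℝ)/2) * ρ * ω := by rw [hωpow]
      _ = ρ^2/4 * ((2 * π) ^ (-(n:ℝ)/2) * ρ ^ (-(n:ℝ)) * rexp (-4) * (ρ ^ d * ω)) := by
          rw [show ρ^2/4 * ((2 * π) ^ (-(n:ℝ)/2) * ρ ^ (-(n:ℝ)) * rexp (-4) * (ρ ^ d * ω))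
            = (1/4) * rexp (-4) * (2 * π) ^ (-(n:ℝ)/2) *
              (ρ^2 * ρ ^ (-(n:ℝ)) * ρ ^ d) * ω by ring, hρpow]
      _ ≤ ρ^2/4 * ((2 * π) ^ (-(n:ℝ)/2) * ρ ^ (-(n:ℝ)) * rexp (-4) * (ρ ^ d * ω)) := le_refl _
  calc (1/4) * rexp (-4) * (2 * π) ^ (-(n:ℝ)/2) * ω ^ (1 - 1/((n:ℝ)-1)) *
      σ ^ (1/((n:ℝ)-1)) ≤ (b - a) * (K * σ) := key
    _ ≤ ∫ t in Set.Ioo a b, g t := step2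
    _ ≤ ∫ t in Set.Ioo (0:ℝ) 2, g t := step1
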